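/- Let A = M - N be an M-splitting of A (i.e., M is an M-matrix and N ≥ 0 entrywise). Then ρ(M⁻¹N) < 1 if and only if A is an M-matrix. -/

import Mathlib

open Matrix BigOperators Finset

/-- Spectral radius of a real matrix: supremum of norms of its complex eigenvalues. -/
noncomputable def specRad {n : ℕ} (A : Matrix (Fin n) (Fin n) ℝ) : ℝ :=
  sSup ((fun μ : ℂ => ‖μ‖) '' spectrum ℂ (A.map (algebraMap ℝ ℂ)))

/-- A Z-matrix has nonpositive off-diagonal entries. -/
def IsZMatrix {n : ℕ} (A : Matrix (Fin n) (Fin n) ℝ) : Prop :=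
  ∀ i j, i ≠ j → A i j ≤ 0

/-- An M-matrix is a nonsingular Z-matrix with entrywise nonnegative inverse. -/
def IsMMatrix {n : ℕ} (A : Matrix (Fin n) (Fin n) ℝ) : Prop :=
  IsZMatrix A ∧ IsUnit A.det ∧ ∀ i j, 0 ≤ A⁻¹ i j

/-- `-L`: the strictly lower triangular part of `A` (so `lowerPart A ≥ 0` for a Z-matrix). -/
def lowerPart {n : ℕ} (A : Matrix (Fin n) (Fin n) ℝ) : Matrix (Fin n) (Fin n) ℝ :=
  Matrix.of fun i j => if (j : ℕ) < (i : ℕ) then -A i j else 0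

/-- `-U`: the strictly upper triangular part of `A`. -/
def upperPart {n : ℕ} (A : Matrix (Fin n) (Fin n) ℝ) : Matrix (Fin n) (Fin n) ℝ :=
  Matrix.of fun i j => if (i : ℕ) < (j : ℕ) then -A i j else 0

/-- Diagonal part of `A`. -/
def diagPart {n : ℕ} (A : Matrix (Fin n) (Fin n) ℝ) : Matrix (Fin n) (Fin n) ℝ :=
  Matrix.of fun i j => if i = j then A i j else 0

/-- The preconditioner `P̃ = I + L(α) + U(α)`: unit diagonal, off-diagonal entries `-α_ij a_ij`. -/
def precond {n : ℕ} (α : Fin n → Fin n → ℝ) (A : Matrix (Fin n) (Fin n) ℝ) :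
    Matrix (Fin n) (Fin n) ℝ :=
  Matrix.of fun i j => if i = j then 1 else -(α i j) * A i j

/-- AOR iteration matrix of `B = D_B - L_B - U_B`:
`(D_B - γ L_B)⁻¹ [(1-ω) D_B + (ω-γ) L_B + ω U_B]`. -/
noncomputable def aorMatrix {n : ℕ} (B : Matrix (Fin n) (Fin n) ℝ) (γ ω : ℝ) :
    Matrix (Fin n) (Fin n) ℝ :=
  (diagPart B - γ • lowerPart B)⁻¹ *
    ((1 - ω) • diagPart B + (ω - γ) • lowerPart B + ω • upperPart B)

/-- Irreducibility: the directed graph with an edge `i → j` whenever `A i j ≠ 0`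
is strongly connected. -/
def IsIrreducibleMat {n : ℕ} (A : Matrix (Fin n) (Fin n) ℝ) : Prop :=
  ∀ i j : Fin n, Relation.ReflTransGen (fun a b => A a b ≠ 0) i j

namespace MSplitAux

open Filter

variable {n : ℕ}

lemma mul_entry_nonneg {T S : Matrix (Fin n) (Fin n) ℝ}
    (hT : ∀ i j, 0 ≤ T i j) (hS : ∀ i j, 0 ≤ S i j) : ∀ i j, 0 ≤ (T * S) i j := by
  intro i j
  rw [Matrix.mul_apply]
  exact Finset.sum_nonneg fun l _ => mul_nonneg (hT i l) (hS l j)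

lemma pow_entry_nonneg {T : Matrix (Fin n) (Fin n) ℝ}
    (hT : ∀ i j, 0 ≤ T i j) : ∀ k : ℕ, ∀ i j, 0 ≤ (T ^ k) i j := by
  intro k
  induction k with
  | zero =>
    intro i j
    rw [pow_zero, Matrix.one_apply]
    split <;> norm_num
  | succ k ih =>
    rw [pow_succ]
    exact mul_entry_nonneg ih hT

/-- Key eigenvalue bound: if `T ≥ 0` and `1 - T` has a nonnegative left inverse,
then every complex eigenvalue of `T` has norm `< 1`. -/
lemma eig_norm_lt_one {T P : Matrix (Fin n) (Fin n) ℝ}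
    (hT : ∀ i j, 0 ≤ T i j) (hP : ∀ i j, 0 ≤ P i j)
    (hPT : P * (1 - T) = 1) :
    ∀ μ ∈ spectrum ℂ (T.map (algebraMap ℝ ℂ)), ‖μ‖ < 1 := by
  intro μ hμ
  by_contra hge
  push_neg at hge
  set Tc := T.map (algebraMap ℝ ℂ) with hTc
  rw [spectrum.mem_iff, Matrix.isUnit_iff_isUnit_det, isUnit_iff_ne_zero, not_not] at hμ
  obtain ⟨v, hv0, hv⟩ := (Matrix.exists_mulVec_eq_zero_iff).mpr hμ
  have hev : Tc *ᵥ v = fun i => μ * v i := by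
    have h1 : (algebraMap ℂ (Matrix (Fin n) (Fin n) ℂ) μ - Tc) *ᵥ v
        = (fun i => μ * v i) - Tc *ᵥ v := by
      rw [Matrix.sub_mulVec, Matrix.algebraMap_eq_diagonal]
      congr 1
      ext i
      rw [Matrix.mulVec_diagonal]
      simp
    rw [hv] at h1
    have := congrArg (fun w => w + Tc *ᵥ v) h1.symm
    simpa [sub_add_cancel] using this.symm
  set y : Fin n → ℝ := fun i => ‖v i‖ with hy
  have hynn : ∀ i, 0 ≤ y i := fun i => norm_nonneg _
  have key : ∀ i, ‖μ‖ * y i ≤ ∑ j, T i j * y j := by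
    intro i
    have h2 : μ * v i = ∑ j, Tc i j * v j := by
      have := congrFun hev i
      rw [Matrix.mulVec, dotProduct] at this
      exact this.symm
    calc ‖μ‖ * y i = ‖μ * v i‖ := (norm_mul _ _).symm
      _ = ‖∑ j, Tc i j * v j‖ := by rw [h2]
      _ ≤ ∑ j, ‖Tc i j * v j‖ := norm_sum_le _ _
      _ = ∑ j, T i j * y j := by
          refine Finset.sum_congr rfl fun j _ => ?_
          rw [norm_mul]
          congr 1
          simp only [hTc, Matrix.map_apply]
          rw [show (algebraMap ℝ ℂ) (T i j) = ((T i j : ℝ) : ℂ) from rfl,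
            Complex.norm_real, Real.norm_eq_abs, abs_of_nonneg (hT i j)]
  have hu : ∀ j, ((1 - T) *ᵥ y) j ≤ 0 := by
    intro j
    have : ((1 - T) *ᵥ y) j = y j - ∑ l, T j l * y l := by
      rw [Matrix.sub_mulVec, Matrix.one_mulVec]
      simp [Matrix.mulVec, dotProduct]
    rw [this]
    have := key j
    nlinarith [hynn j, hge]
  have hyle : ∀ i, y i ≤ 0 := by
    intro i
    have h3 : y i = ∑ j, P i j * ((1 - T) *ᵥ y) j := by
      have h4 : P *ᵥ ((1 - T) *ᵥ y) = y := by
        rw [Matrix.mulVec_mulVec, hPT, Matrix.one_mulVec]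
      have := congrFun h4 i
      rw [Matrix.mulVec, dotProduct] at this
      exact this.symm
    rw [h3]
    exact Finset.sum_nonpos fun j _ => mul_nonpos_of_nonneg_of_nonpos (hP i j) (hu j)
  apply hv0
  funext i
  have : y i = 0 := le_antisymm (hyle i) (hynn i)
  simpa [hy, norm_eq_zero] using this

/-- If all complex eigenvalues of `T` have norm `< 1` then `1 - T` is invertible. -/
lemma isUnit_det_one_sub {T : Matrix (Fin n) (Fin n) ℝ}
    (h : ∀ μ ∈ spectrum ℂ (T.map (algebraMap ℝ ℂ)), ‖μ‖ < 1) :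
    IsUnit (1 - T).det := by
  have h1 : (1 : ℂ) ∉ spectrum ℂ (T.map (algebraMap ℝ ℂ)) := by
    intro hm
    simpa using h 1 hm
  rw [spectrum.mem_iff, not_not, _root_.map_one, Matrix.isUnit_iff_isUnit_det] at h1
  have hmap : (1 - T.map (algebraMap ℝ ℂ))
      = ((1 : Matrix (Fin n) (Fin n) ℝ) - T).map (algebraMap ℝ ℂ) := by
    have := map_sub ((algebraMap ℝ ℂ).mapMatrix) (1 : Matrix (Fin n) (Fin n) ℝ) T
    simpa [RingHom.mapMatrix_apply] using this.symm
  rw [hmap, ← RingHom.mapMatrix_apply, ← RingHom.map_det] at h1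
  rw [isUnit_iff_ne_zero] at h1 ⊢
  intro h0
  rw [h0, map_zero] at h1
  exact h1 rfl

section NormedInstances

attribute [local instance] Matrix.linftyOpNormedRing Matrix.linftyOpNormedAlgebra

lemma entry_norm_le (B : Matrix (Fin n) (Fin n) ℂ) (i j : Fin n) : ‖B i j‖ ≤ ‖B‖ := by
  have h1 : ‖B i j‖₊ ≤ ‖B‖₊ := by
    rw [Matrix.linfty_opNNNorm_def]
    refine le_trans (Finset.single_le_sum (f := fun j' => ‖B i j'‖₊)
      (fun _ _ => zero_le) (Finset.mem_univ j)) ?_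
    exact Finset.le_sup (f := fun i => ∑ j : Fin n, ‖B i j‖₊) (Finset.mem_univ i)
  exact_mod_cast h1

/-- Entrywise convergence of powers to zero when the spectral radius is `< 1`. -/
lemma pow_entry_tendsto_zero [NeZero n] {T : Matrix (Fin n) (Fin n) ℝ}
    (h : ∀ μ ∈ spectrum ℂ (T.map (algebraMap ℝ ℂ)), ‖μ‖ < 1) (i j : Fin n) :
    Tendsto (fun k => (T ^ k) i j) atTop (nhds 0) := by
  set Tc := T.map (algebraMap ℝ ℂ) with hTc
  have hρ : spectralRadius ℂ Tc < 1 := by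
    have := spectrum.spectralRadius_lt_of_forall_lt (a := Tc) (r := 1) ?_
    · simpa using this
    · intro z hz
      have := h z hz
      rw [← NNReal.coe_lt_coe]
      simpa using this
  have hfin : spectralRadius ℂ Tc ≠ ⊤ := (lt_of_lt_of_le hρ le_top).ne
  set c : ℝ := (spectralRadius ℂ Tc).toReal with hc
  have hc1 : c < 1 := by
    rw [hc, ← ENNReal.toReal_one]
    exact ENNReal.toReal_strict_mono ENNReal.one_ne_top hρ
  have hc0 : 0 ≤ c := ENNReal.toReal_nonneg
  set r : ℝ := (c + 1) / 2 with hr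
  have hcr : c < r := by rw [hr]; linarith
  have hr1 : r < 1 := by rw [hr]; linarith
  have hr0 : 0 ≤ r := by rw [hr]; linarith
  have hg := spectrum.pow_norm_pow_one_div_tendsto_nhds_spectralRadius Tc
  have hgreal : Tendsto (fun k : ℕ => ‖Tc ^ k‖ ^ (1 / (k : ℝ))) atTop (nhds c) := by
    have hcont := (ENNReal.tendsto_toReal hfin).comp hg
    have heq : (fun k : ℕ => (ENNReal.ofReal (‖Tc ^ k‖ ^ (1 / (k : ℝ)))).toReal)
        = fun k : ℕ => ‖Tc ^ k‖ ^ (1 / (k : ℝ)) := by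
      funext k
      rw [ENNReal.toReal_ofReal]
      positivity
    rwa [Function.comp_def, heq] at hcont
  have hev : ∀ᶠ k : ℕ in atTop, ‖Tc ^ k‖ ^ (1 / (k : ℝ)) < r :=
    hgreal.eventually_lt_const hcr
  have hbound : ∀ᶠ k : ℕ in atTop, ‖(T ^ k) i j‖ ≤ r ^ k := by
    filter_upwards [hev, eventually_ge_atTop 1] with k hk hk1
    have hk0 : (k : ℝ) ≠ 0 := by positivity
    have hnorm : ‖Tc ^ k‖ ≤ r ^ k := by
      have h1 : (‖Tc ^ k‖ ^ (1 / (k : ℝ))) ^ (k : ℕ) ≤ r ^ k :=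
        pow_le_pow_left₀ (Real.rpow_nonneg (norm_nonneg _) _) hk.le k
      rwa [← Real.rpow_natCast (‖Tc ^ k‖ ^ (1 / (k : ℝ))) k, ← Real.rpow_mul (norm_nonneg _),
        one_div_mul_cancel hk0, Real.rpow_one] at h1
    have hentry : ‖(T ^ k) i j‖ = ‖(Tc ^ k) i j‖ := by
      have hmap : Tc ^ k = (T ^ k).map (algebraMap ℝ ℂ) := by
        have := map_pow ((algebraMap ℝ ℂ).mapMatrix) T k
        simpa [hTc, RingHom.mapMatrix_apply] using this.symm
      rw [hmap, Matrix.map_apply]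
      rw [show (algebraMap ℝ ℂ) ((T ^ k) i j) = (((T ^ k) i j : ℝ) : ℂ) from rfl,
        Complex.norm_real]
    rw [hentry]
    exact le_trans (entry_norm_le _ i j) hnorm
  exact squeeze_zero_norm' hbound (tendsto_pow_atTop_nhds_zero_of_lt_one hr0 hr1)

end NormedInstances

/-- Neumann-series argument: the inverse of `1 - T` is entrywise nonnegative. -/
lemma inv_one_sub_nonneg [NeZero n] {T : Matrix (Fin n) (Fin n) ℝ}
    (hT : ∀ i j, 0 ≤ T i j)
    (h : ∀ μ ∈ spectrum ℂ (T.map (algebraMap ℝ ℂ)), ‖μ‖ < 1) :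
    ∀ i j, 0 ≤ (1 - T)⁻¹ i j := by
  have hdet : IsUnit (1 - T).det := isUnit_det_one_sub h
  have hpow : ∀ i j, Tendsto (fun k => (T ^ k) i j) atTop (nhds 0) :=
    pow_entry_tendsto_zero h
  have hpnn : ∀ k : ℕ, ∀ i j, 0 ≤ (T ^ k) i j := pow_entry_nonneg hT
  intro i j
  have hSk : ∀ k : ℕ, (∑ m ∈ Finset.range k, T ^ m) = (1 - T)⁻¹ * (1 - T ^ k) := by
    intro k
    set S := ∑ m ∈ Finset.range k, T ^ m with hS
    have hcomm : Commute T S := Commute.sum_right _ _ _ fun m _ => (Commute.refl T).pow_right m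
    have h1 : (1 - T) * S = 1 - T ^ k := by
      have h2 := geom_sum_mul T k
      have h3 : S * (1 - T) = 1 - T ^ k := by
        have := congrArg Neg.neg h2
        rw [← mul_neg, neg_sub, neg_sub] at this
        exact this
      calc (1 - T) * S = S * (1 - T) := ((Commute.one_left S).sub_left hcomm).eq
        _ = 1 - T ^ k := h3
    calc S = 1 * S := (one_mul S).symm
      _ = ((1 - T)⁻¹ * (1 - T)) * S := by rw [Matrix.nonsing_inv_mul _ hdet]
      _ = (1 - T)⁻¹ * ((1 - T) * S) := by rw [Matrix.mul_assoc]
      _ = (1 - T)⁻¹ * (1 - T ^ k) := by rw [h1]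
  have htend : Tendsto (fun k => (∑ m ∈ Finset.range k, T ^ m) i j) atTop
      (nhds ((1 - T)⁻¹ i j)) := by
    have heq : (fun k => (∑ m ∈ Finset.range k, T ^ m) i j)
        = fun k => ∑ l, (1 - T)⁻¹ i l * ((1 : Matrix (Fin n) (Fin n) ℝ) l j - (T ^ k) l j) := by
      funext k
      rw [hSk k, Matrix.mul_apply]
      refine Finset.sum_congr rfl fun l _ => ?_
      rw [Matrix.sub_apply]
    rw [heq]
    have hlim : Tendsto
        (fun k => ∑ l, (1 - T)⁻¹ i l * ((1 : Matrix (Fin n) (Fin n) ℝ) l j - (T ^ k) l j))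
        atTop (nhds (∑ l, (1 - T)⁻¹ i l * ((1 : Matrix (Fin n) (Fin n) ℝ) l j - 0))) := by
      refine tendsto_finset_sum _ fun l _ => ?_
      exact tendsto_const_nhds.mul (tendsto_const_nhds.sub (hpow l j))
    have hfinal : (∑ l, (1 - T)⁻¹ i l * ((1 : Matrix (Fin n) (Fin n) ℝ) l j - 0))
        = (1 - T)⁻¹ i j := by
      simp only [sub_zero]
      rw [← Matrix.mul_apply, mul_one]
    rwa [hfinal] at hlim
  refine ge_of_tendsto' htend fun k => ?_
  rw [Matrix.sum_apply]
  exact Finset.sum_nonneg fun m _ => hpnn m i j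

lemma specRad_lt_one_iff (T : Matrix (Fin n) (Fin n) ℝ) :
    specRad T < 1 ↔ ∀ μ ∈ spectrum ℂ (T.map (algebraMap ℝ ℂ)), ‖μ‖ < 1 := by
  set s := (fun μ : ℂ => ‖μ‖) '' spectrum ℂ (T.map (algebraMap ℝ ℂ)) with hs
  have hfin : s.Finite := (Matrix.finite_spectrum _).image _
  constructor
  · intro h μ hμ
    exact lt_of_le_of_lt (le_csSup hfin.bddAbove ⟨μ, hμ, rfl⟩) h
  · intro h
    rcases s.eq_empty_or_nonempty with he | hne
    · rw [specRad, ← hs, he, Real.sSup_empty]; norm_num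
    · obtain ⟨μ, hμ, hEq⟩ := hne.csSup_mem hfin
      rw [specRad, ← hs, ← hEq]
      exact h μ hμ

end MSplitAux

/-- For an M-splitting `A = M - N`, `ρ(M⁻¹N) < 1` iff `A` is an M-matrix. -/
theorem stmt0 {n : ℕ} (A M N : Matrix (Fin n) (Fin n) ℝ)
    (hsplit : A = M - N) (hM : IsMMatrix M) (hN : ∀ i j, 0 ≤ N i j) :
    specRad (M⁻¹ * N) < 1 ↔ IsMMatrix A := by
  rcases Nat.eq_zero_or_pos n with rfl | hpos
  · -- trivial case `n = 0`
    refine iff_of_true ?_ ?_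
    · rw [MSplitAux.specRad_lt_one_iff]
      intro μ hμ
      rw [spectrum.mem_iff] at hμ
      exact absurd (isUnit_of_subsingleton _) hμ
    · exact ⟨fun i => i.elim0, by rw [Matrix.det_fin_zero]; exact isUnit_one,
        fun i => i.elim0⟩
  · haveI : NeZero n := ⟨hpos.ne'⟩
    set T := M⁻¹ * N with hTdef
    have hT : ∀ i j, 0 ≤ T i j := MSplitAux.mul_entry_nonneg hM.2.2 hN
    constructor
    · intro h
      have heig := (MSplitAux.specRad_lt_one_iff T).mp h
      have hdet1T : IsUnit (1 - T).det := MSplitAux.isUnit_det_one_sub heig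
      have hinvT := MSplitAux.inv_one_sub_nonneg hT heig
      have hMA : A = M * (1 - T) := by
        rw [Matrix.mul_sub, mul_one, hTdef, ← Matrix.mul_assoc,
          Matrix.mul_nonsing_inv _ hM.2.1, Matrix.one_mul, hsplit]
      refine ⟨?_, ?_, ?_⟩
      · intro i j hij
        rw [hsplit, Matrix.sub_apply]
        exact le_trans (sub_le_self _ (hN i j)) (hM.1 i j hij)
      · rw [hMA, Matrix.det_mul]
        exact hM.2.1.mul hdet1T
      · have hAinv : A⁻¹ = (1 - T)⁻¹ * M⁻¹ := by rw [hMA, Matrix.mul_inv_rev]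
        rw [hAinv]
        exact MSplitAux.mul_entry_nonneg hinvT hM.2.2
    · intro h
      have hMeq : M = A + N := by rw [hsplit, sub_add_cancel]
      set P := 1 + A⁻¹ * N with hPdef
      have hPnn : ∀ i j, 0 ≤ P i j := by
        intro i j
        rw [hPdef, Matrix.add_apply]
        refine add_nonneg ?_ (MSplitAux.mul_entry_nonneg h.2.2 hN i j)
        rw [Matrix.one_apply]
        split <;> norm_num
      have hPeq : P = A⁻¹ * M := by
        rw [hMeq, Matrix.mul_add, Matrix.nonsing_inv_mul _ h.2.1, hPdef]
      have h1T : 1 - T = M⁻¹ * A := by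
        rw [hsplit, Matrix.mul_sub, Matrix.nonsing_inv_mul _ hM.2.1, hTdef]
      have hPT : P * (1 - T) = 1 := by
        rw [hPeq, h1T, Matrix.mul_assoc, ← Matrix.mul_assoc M M⁻¹ A,
          Matrix.mul_nonsing_inv _ hM.2.1, Matrix.one_mul, Matrix.nonsing_inv_mul _ h.2.1]
      exact (MSplitAux.specRad_lt_one_iff T).mpr
        (MSplitAux.eig_norm_lt_one hT hPnn hPT)
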